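/- For every integer m ≥ 2 and positive integer n, the number of partitions of n into parts not divisible by m whose largest part is congruent to m−1 modulo m equals the number of partitions of n+1 in which the largest part is divisible by m, say equal to m·j, and all parts less than or equal to j occur fewer than m times. -/

import Mathlib

namespace LinZhangAux

open Multiset

/-! ### valuation -/

def sval (m b : ℕ) : ℕ := m.maxPowDiv b

def oddp (m b : ℕ) : ℕ := b / m ^ sval m b

lemma sval_mul_oddp (m b : ℕ) : m ^ sval m b * oddp m b = b :=
  Nat.mul_div_cancel' (Nat.maxPowDiv.pow_dvd (p := m) (n := b))

lemma oddp_le (m b : ℕ) : oddp m b ≤ b :=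
  Nat.div_le_self _ _

lemma oddp_pos (m : ℕ) {b : ℕ} (hb : 0 < b) : 0 < oddp m b := by
  have h2 := sval_mul_oddp m b
  rcases Nat.eq_zero_or_pos (oddp m b) with h | h
  · rw [h, mul_zero] at h2; omega
  · exact h

lemma not_dvd_oddp {m : ℕ} (hm : 2 ≤ m) {b : ℕ} (hb : 0 < b) : ¬ m ∣ oddp m b := by
  rintro ⟨k, hk⟩
  have h1 : m ^ (sval m b + 1) ∣ b := by
    refine ⟨k, ?_⟩
    calc b = m ^ sval m b * oddp m b := (sval_mul_oddp m b).symm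
    _ = m ^ (sval m b + 1) * k := by rw [hk, pow_succ]; ring
  have := (Nat.pow_dvd_iff_le_padicValNat (by omega : m ≠ 1) (by omega : b ≠ 0)).mp h1
  unfold sval Nat.maxPowDiv at *
  omega

lemma sval_pow_mul {m : ℕ} (hm : 2 ≤ m) {a : ℕ} (ha : ¬ m ∣ a) (i : ℕ) :
    sval m (m ^ i * a) = i := by
  have ha0 : 0 < a := Nat.pos_of_ne_zero (fun h => ha (h ▸ dvd_zero m))
  have h0 : sval m a = 0 := by
    by_contra h
    have h2 : m ∣ m ^ sval m a := dvd_pow_self m h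
    exact ha (h2.trans (Nat.maxPowDiv.pow_dvd (p := m) (n := a)))
  have h3 := Nat.maxPowDiv.base_pow_mul (p := m) (n := a) (k := i) (by omega : 1 < m) (by omega)
  unfold sval Nat.maxPowDiv at *
  omega

lemma oddp_pow_mul {m : ℕ} (hm : 2 ≤ m) {a : ℕ} (ha : ¬ m ∣ a) (i : ℕ) :
    oddp m (m ^ i * a) = a := by
  unfold oddp
  rw [sval_pow_mul hm ha i]
  exact Nat.mul_div_cancel_left a (Nat.pow_pos (by omega))

/-! ### digit arithmetic -/

lemma digits_sum {m : ℕ} (hm : 2 ≤ m) (c T : ℕ) :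
    (∑ i ∈ Finset.range T, (c / m ^ i % m) * m ^ i) + (c / m ^ T) * m ^ T = c := by
  induction T with
  | zero => simp
  | succ T ih =>
    rw [Finset.sum_range_succ, add_assoc]
    have h1 : c / m ^ (T + 1) = c / m ^ T / m := by
      rw [pow_succ, Nat.div_div_eq_div_mul]
    have h2 : (c / m ^ T % m) * m ^ T + (c / m ^ (T+1)) * m ^ (T+1) = (c / m ^ T) * m ^ T := by
      rw [h1, pow_succ]
      calc (c / m ^ T % m) * m ^ T + (c / m ^ T / m) * (m ^ T * m)
          = ((c / m ^ T) % m + (c / m ^ T) / m * m) * m ^ T := by ring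
        _ = (c / m ^ T) * m ^ T := by rw [Nat.mod_add_div']
    rw [h2, ih]

lemma digit_div {m : ℕ} (hm : 2 ≤ m) (T : ℕ) (d : ℕ → ℕ) (hd : ∀ i < T, d i < m) :
    ∀ v ≤ T, (∑ i ∈ Finset.range (T + 1), d i * m ^ i) / m ^ v
      = ∑ i ∈ Finset.range (T + 1 - v), d (v + i) * m ^ i := by
  intro v hv
  induction v with
  | zero => simp
  | succ v ih =>
    have hvT : v ≤ T := by omega
    have h1 := ih hvT
    have h2 : (∑ i ∈ Finset.range (T + 1), d i * m ^ i) / m ^ (v + 1)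
        = (∑ i ∈ Finset.range (T + 1), d i * m ^ i) / m ^ v / m := by
      rw [pow_succ, Nat.div_div_eq_div_mul]
    rw [h2, h1]
    have hTv : T + 1 - v = (T - v) + 1 := by omega
    rw [hTv, Finset.sum_range_succ']
    have h3 : ∀ i ∈ Finset.range (T - v), d (v + (i + 1)) * m ^ (i + 1)
        = (d (v + 1 + i) * m ^ i) * m := by
      intro i _
      rw [show v + (i + 1) = v + 1 + i by omega, pow_succ]; ring
    rw [Finset.sum_congr rfl h3, ← Finset.sum_mul]
    simp only [pow_zero, mul_one, add_zero]
    rw [add_comm, Nat.add_mul_div_right _ _ (by omega : 0 < m)]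
    rw [Nat.div_eq_of_lt (hd v (by omega)), zero_add]
    rw [show T + 1 - (v + 1) = T - v from by omega]

lemma digit_extract_lt {m : ℕ} (hm : 2 ≤ m) (T : ℕ) (d : ℕ → ℕ) (hd : ∀ i < T, d i < m)
    {v : ℕ} (hv : v < T) :
    (∑ i ∈ Finset.range (T + 1), d i * m ^ i) / m ^ v % m = d v := by
  rw [digit_div hm T d hd v (by omega)]
  have hTv : T + 1 - v = (T - v - 1) + 1 + 1 := by omega
  rw [hTv, Finset.sum_range_succ']
  have h3 : ∀ i ∈ Finset.range (T - v - 1 + 1), d (v + (i + 1)) * m ^ (i + 1)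
      = (d (v + (i + 1)) * m ^ i) * m := by
    intro i _; rw [pow_succ]; ring
  rw [Finset.sum_congr rfl h3, ← Finset.sum_mul]
  simp only [pow_zero, mul_one, add_zero]
  rw [add_comm, Nat.add_mul_mod_self_right]
  exact Nat.mod_eq_of_lt (hd v hv)

lemma digit_extract_top {m : ℕ} (hm : 2 ≤ m) (T : ℕ) (d : ℕ → ℕ) (hd : ∀ i < T, d i < m) :
    (∑ i ∈ Finset.range (T + 1), d i * m ^ i) / m ^ T = d T := by
  rw [digit_div hm T d hd T le_rfl]
  simp

/-! ### splitting -/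

def splitM (m : ℕ) (t : Multiset ℕ) : Multiset ℕ :=
  t.bind fun b => Multiset.replicate (m ^ sval m b) (oddp m b)

@[simp] lemma splitM_zero (m : ℕ) : splitM m 0 = 0 := rfl

lemma splitM_cons (m b : ℕ) (t : Multiset ℕ) :
    splitM m (b ::ₘ t) = Multiset.replicate (m ^ sval m b) (oddp m b) + splitM m t :=
  Multiset.cons_bind _ _ _

lemma splitM_add (m : ℕ) (t u : Multiset ℕ) :
    splitM m (t + u) = splitM m t + splitM m u :=
  Multiset.add_bind _ _ _

lemma splitM_replicate {m : ℕ} (hm : 2 ≤ m) {a : ℕ} (ha : ¬ m ∣ a) (k i : ℕ) :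
    splitM m (Multiset.replicate k (m ^ i * a)) = Multiset.replicate (k * m ^ i) a := by
  induction k with
  | zero => simp [splitM]
  | succ k ih =>
    rw [Multiset.replicate_succ, splitM_cons, ih, sval_pow_mul hm ha, oddp_pow_mul hm ha]
    rw [← Multiset.replicate_add]
    congr 1
    ring

lemma sum_splitM (m : ℕ) (t : Multiset ℕ) : (splitM m t).sum = t.sum := by
  induction t using Multiset.induction with
  | empty => simp
  | cons b t ih =>
    rw [splitM_cons, Multiset.sum_add, ih, Multiset.sum_cons, Multiset.sum_replicate,
      smul_eq_mul, sval_mul_oddp]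

lemma mem_splitM {m : ℕ} (hm : 2 ≤ m) {t : Multiset ℕ} {a : ℕ} :
    a ∈ splitM m t ↔ ∃ b ∈ t, oddp m b = a := by
  unfold splitM
  rw [Multiset.mem_bind]
  constructor
  · rintro ⟨b, hb, ha⟩
    exact ⟨b, hb, (Multiset.eq_of_mem_replicate ha).symm⟩
  · rintro ⟨b, hb, ha⟩
    refine ⟨b, hb, ?_⟩
    rw [← ha]
    exact Multiset.mem_replicate.2 ⟨by positivity, rfl⟩

lemma count_splitM {m : ℕ} (hm : 2 ≤ m) {a : ℕ} (ha : ¬ m ∣ a) (t : Multiset ℕ) (N : ℕ)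
    (hN : ∀ b ∈ t, b < m ^ N * a) :
    (splitM m t).count a = ∑ i ∈ Finset.range N, t.count (m ^ i * a) * m ^ i := by
  have ha0 : 0 < a := Nat.pos_of_ne_zero (fun h => ha (h ▸ dvd_zero m))
  induction t using Multiset.induction with
  | empty => simp
  | cons b t ih =>
    have hNt : ∀ b' ∈ t, b' < m ^ N * a := fun b' hb' => hN b' (Multiset.mem_cons_of_mem hb')
    rw [splitM_cons, Multiset.count_add, ih hNt]
    have hcons : ∀ x : ℕ, (b ::ₘ t).count x = t.count x + (if x = b then 1 else 0) := by
      intro x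
      rw [Multiset.count_cons]
    simp only [hcons, add_mul, Finset.sum_add_distrib]
    rw [add_comm]
    congr 1
    rw [Multiset.count_replicate]
    by_cases hba : oddp m b = a
    · rw [if_pos hba]
      have hb0 : 0 < b := by
        by_contra h
        have : b = 0 := by omega
        subst this
        simp [oddp, sval] at hba
        omega
      have hbeq : b = m ^ sval m b * a := by rw [← hba, sval_mul_oddp]
      have hsvN : sval m b < N := by
        have hb' := hN b (Multiset.mem_cons_self b t)
        rw [hbeq] at hb'
        have := Nat.pow_lt_pow_iff_right (by omega : 1 < m) (n := sval m b) (m := N)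
        by_contra hcon
        have : m ^ N ≤ m ^ sval m b := Nat.pow_le_pow_right (by omega) (by omega)
        nlinarith
      rw [Finset.sum_eq_single (sval m b)]
      · rw [if_pos hbeq.symm, one_mul]
      · intro i _ hi
        rw [if_neg, zero_mul]
        intro hcon
        exact hi (by rw [← sval_pow_mul hm ha i, hcon])
      · intro h
        exact absurd (Finset.mem_range.2 hsvN) h
    · rw [if_neg hba]
      symm
      apply Finset.sum_eq_zero
      intro i _
      rw [if_neg, zero_mul]
      intro hcon
      apply hba
      rw [← hcon, oddp_pow_mul hm ha]

/-! ### the truncation index -/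

lemma exists_pow_gt {m : ℕ} (hm : 2 ≤ m) (j a : ℕ) : ∃ t : ℕ, j < m ^ t * max 1 a :=
  ⟨j, lt_of_lt_of_le (Nat.lt_two_pow_self (n := j))
    (le_trans (Nat.pow_le_pow_left hm j) (Nat.le_mul_of_pos_right _ (by omega)))⟩

def TT (m j : ℕ) (hm : 2 ≤ m) (a : ℕ) : ℕ := Nat.find (exists_pow_gt hm j a)

lemma TT_spec {m : ℕ} (j : ℕ) (hm : 2 ≤ m) {a : ℕ} (ha : 0 < a) :
    j < m ^ TT m j hm a * a := by
  have h := Nat.find_spec (exists_pow_gt hm j a)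
  have h2 : (1 : ℕ) ⊔ a = a := max_eq_right (by omega)
  exact lt_of_lt_of_eq h (congrArg (fun x => m ^ TT m j hm a * x) h2)

lemma TT_min {m : ℕ} (j : ℕ) (hm : 2 ≤ m) {a : ℕ} (ha : 0 < a) {i : ℕ} (hi : i < TT m j hm a) :
    m ^ i * a ≤ j := by
  have h := Nat.find_min (exists_pow_gt hm j a) hi
  have h2 : m ^ i * max 1 a = m ^ i * a :=
    congrArg (fun x => m ^ i * x) (max_eq_right (show 1 ≤ a by omega))
  omega
/-! ### chunks and merging -/

def chunk (m j : ℕ) (hm : 2 ≤ m) (a c : ℕ) : Multiset ℕ :=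
  (∑ i ∈ Finset.range (TT m j hm a), Multiset.replicate (c / m ^ i % m) (m ^ i * a))
  + Multiset.replicate (c / m ^ TT m j hm a) (m ^ TT m j hm a * a)

lemma splitM_finsum (m : ℕ) {α : Type*} (F : Finset α) (f : α → Multiset ℕ) :
    splitM m (∑ x ∈ F, f x) = ∑ x ∈ F, splitM m (f x) := by
  classical
  induction F using Finset.induction_on with
  | empty => simp
  | @insert x F hx ih =>
    rw [Finset.sum_insert hx, Finset.sum_insert hx, splitM_add, ih]

lemma replicate_finsum {α : Type*} (a : ℕ) (F : Finset α) (f : α → ℕ) :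
    ∑ x ∈ F, Multiset.replicate (f x) a = Multiset.replicate (∑ x ∈ F, f x) a := by
  classical
  induction F using Finset.induction_on with
  | empty => simp
  | @insert x F hx ih =>
    rw [Finset.sum_insert hx, Finset.sum_insert hx, ih, Multiset.replicate_add]

lemma splitM_chunk {m : ℕ} (j : ℕ) (hm : 2 ≤ m) {a : ℕ} (ha : ¬ m ∣ a) (c : ℕ) :
    splitM m (chunk m j hm a c) = Multiset.replicate c a := by
  unfold chunk
  rw [splitM_add, splitM_finsum]
  have h1 : ∀ i ∈ Finset.range (TT m j hm a),
      splitM m (Multiset.replicate (c / m ^ i % m) (m ^ i * a))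
        = Multiset.replicate ((c / m ^ i % m) * m ^ i) a := fun i _ => splitM_replicate hm ha _ _
  rw [Finset.sum_congr rfl h1, splitM_replicate hm ha, replicate_finsum,
    ← Multiset.replicate_add, digits_sum hm]

lemma mem_chunk {m j : ℕ} {hm : 2 ≤ m} {a c b : ℕ} (hb : b ∈ chunk m j hm a c) :
    ∃ i ≤ TT m j hm a, b = m ^ i * a := by
  unfold chunk at hb
  rw [Multiset.mem_add] at hb
  rcases hb with hb | hb
  · rw [Multiset.mem_sum] at hb
    obtain ⟨i, hi, hb⟩ := hb
    exact ⟨i, le_of_lt (Finset.mem_range.1 hi), Multiset.eq_of_mem_replicate hb⟩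
  · exact ⟨TT m j hm a, le_rfl, Multiset.eq_of_mem_replicate hb⟩

lemma count_chunk_eq {m : ℕ} (j : ℕ) (hm : 2 ≤ m) {a : ℕ} (ha0 : 0 < a) (c : ℕ)
    {v : ℕ} (hv : v ≤ TT m j hm a) :
    (chunk m j hm a c).count (m ^ v * a)
      = if v < TT m j hm a then c / m ^ v % m else c / m ^ TT m j hm a := by
  have hinj : ∀ i i' : ℕ, m ^ i * a = m ^ i' * a → i = i' := by
    intro i i' h
    have h2 : m ^ i = m ^ i' := Nat.eq_of_mul_eq_mul_right ha0 h
    exact Nat.pow_right_injective hm h2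
  unfold chunk
  rw [Multiset.count_add, Multiset.count_sum']
  by_cases hvT : v < TT m j hm a
  · rw [if_pos hvT]
    have htop : (Multiset.replicate (c / m ^ TT m j hm a) (m ^ TT m j hm a * a)).count
        (m ^ v * a) = 0 := by
      rw [Multiset.count_replicate, if_neg]
      intro h
      have := hinj _ _ h
      omega
    rw [htop, add_zero, Finset.sum_eq_single v]
    · rw [Multiset.count_replicate, if_pos rfl]
    · intro i _ hi
      rw [Multiset.count_replicate, if_neg (fun h => hi (hinj _ _ h))]
    · intro h
      exact absurd (Finset.mem_range.2 hvT) h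
  · have hvT' : v = TT m j hm a := by omega
    rw [if_neg hvT]
    subst hvT'
    rw [Multiset.count_replicate, if_pos rfl]
    rw [Finset.sum_eq_zero, zero_add]
    intro i hi
    rw [Multiset.count_replicate, if_neg]
    intro h
    have := hinj _ _ h
    rw [Finset.mem_range] at hi
    omega

lemma count_chunk_ne {m j : ℕ} (hm : 2 ≤ m) {a c b : ℕ} (h : ∀ i, b ≠ m ^ i * a) :
    (chunk m j hm a c).count b = 0 := by
  rw [Multiset.count_eq_zero]
  intro hb
  obtain ⟨i, _, hbi⟩ := mem_chunk hb
  exact h i hbi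

lemma chunk_part_le {m j : ℕ} (hm : 2 ≤ m) {a i : ℕ} (ha0 : 0 < a) (ha : a ≤ m * j)
    (hi : i ≤ TT m j hm a) : m ^ i * a ≤ m * j := by
  rcases Nat.lt_or_ge i (TT m j hm a) with h | h
  · have h1 := TT_min j hm ha0 h
    have h2 : j ≤ m * j := Nat.le_mul_of_pos_left j (by omega)
    omega
  · have hiT : i = TT m j hm a := le_antisymm hi h
    rcases Nat.eq_zero_or_pos (TT m j hm a) with h0 | h0
    · rw [hiT, h0]; simpa using ha
    · have h1 : m ^ (TT m j hm a - 1) * a ≤ j := TT_min j hm ha0 (by omega)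
      rw [hiT]
      calc m ^ TT m j hm a * a = m * (m ^ (TT m j hm a - 1) * a) := by
            rw [← mul_assoc, ← pow_succ']
            congr 2
            omega
        _ ≤ m * j := Nat.mul_le_mul_left m h1

def mergeM (m j : ℕ) (hm : 2 ≤ m) (s : Multiset ℕ) : Multiset ℕ :=
  ∑ a ∈ s.toFinset, chunk m j hm a (s.count a)

lemma splitM_mergeM {m : ℕ} (j : ℕ) (hm : 2 ≤ m) {s : Multiset ℕ}
    (hs : ∀ a ∈ s, ¬ m ∣ a) : splitM m (mergeM m j hm s) = s := by
  unfold mergeM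
  rw [splitM_finsum]
  have h1 : ∀ a ∈ s.toFinset, splitM m (chunk m j hm a (s.count a))
      = Multiset.replicate (s.count a) a := by
    intro a ha
    exact splitM_chunk j hm (hs a (Multiset.mem_toFinset.1 ha)) _
  rw [Finset.sum_congr rfl h1]
  have h2 : ∀ a ∈ s.toFinset, Multiset.replicate (s.count a) a = s.count a • ({a} : Multiset ℕ) :=
    fun a _ => (Multiset.nsmul_singleton a _).symm
  rw [Finset.sum_congr rfl h2, Multiset.toFinset_sum_count_nsmul_eq]

lemma mem_mergeM {m j : ℕ} {hm : 2 ≤ m} {s : Multiset ℕ} {b : ℕ} (hb : b ∈ mergeM m j hm s) :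
    ∃ a ∈ s, ∃ i ≤ TT m j hm a, b = m ^ i * a := by
  unfold mergeM at hb
  rw [Multiset.mem_sum] at hb
  obtain ⟨a, ha, hb⟩ := hb
  obtain ⟨i, hi, hbi⟩ := mem_chunk hb
  exact ⟨a, Multiset.mem_toFinset.1 ha, i, hi, hbi⟩

lemma count_mergeM {m : ℕ} (j : ℕ) (hm : 2 ≤ m) {s : Multiset ℕ}
    (hs : ∀ a ∈ s, ¬ m ∣ a ∧ 0 < a) {b : ℕ} (hb : 0 < b)
    (hvT : sval m b ≤ TT m j hm (oddp m b)) :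
    (mergeM m j hm s).count b
      = if sval m b < TT m j hm (oddp m b) then s.count (oddp m b) / m ^ sval m b % m
        else s.count (oddp m b) / m ^ TT m j hm (oddp m b) := by
  have ha0 : 0 < oddp m b := oddp_pos m hb
  have hab : m ^ sval m b * oddp m b = b := sval_mul_oddp m b
  unfold mergeM
  rw [Multiset.count_sum']
  by_cases hmem : oddp m b ∈ s.toFinset
  · rw [Finset.sum_eq_single (oddp m b)]
    · have h := count_chunk_eq j hm ha0 (s.count (oddp m b)) hvT
      rw [hab] at h
      exact h
    · intro a ha hne
      apply count_chunk_ne hm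
      intro i hbi
      have hdvd : ¬ m ∣ a := (hs a (Multiset.mem_toFinset.1 ha)).1
      exact hne (by rw [hbi, oddp_pow_mul hm hdvd])
    · intro h; exact absurd hmem h
  · have hc0 : s.count (oddp m b) = 0 :=
      Multiset.count_eq_zero.2 (fun h => hmem (Multiset.mem_toFinset.2 h))
    rw [hc0]
    rw [Finset.sum_eq_zero]
    · simp
    · intro a ha
      apply count_chunk_ne hm
      intro i hbi
      have hdvd : ¬ m ∣ a := (hs a (Multiset.mem_toFinset.1 ha)).1
      apply hmem
      rw [hbi, oddp_pow_mul hm hdvd]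
      exact ha
/-! ### properties of merge, and merge ∘ split = id -/

lemma mergeM_bounds {m j : ℕ} (hm : 2 ≤ m) {s : Multiset ℕ}
    (hs : ∀ a ∈ s, ¬ m ∣ a ∧ 0 < a ∧ a ≤ m * j) :
    ∀ b ∈ mergeM m j hm s, 0 < b ∧ b ≤ m * j := by
  intro b hb
  obtain ⟨a, ha, i, hi, hbi⟩ := mem_mergeM hb
  obtain ⟨_, ha0, haj⟩ := hs a ha
  constructor
  · rw [hbi]; positivity
  · rw [hbi]; exact chunk_part_le hm ha0 haj hi

lemma sval_lt_TT {m j : ℕ} (hm : 2 ≤ m) {b : ℕ} (hb : 0 < b) (hbj : b ≤ j) :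
    sval m b < TT m j hm (oddp m b) := by
  have ha0 : 0 < oddp m b := oddp_pos m hb
  have hab : m ^ sval m b * oddp m b = b := sval_mul_oddp m b
  by_contra h
  have h2 : m ^ TT m j hm (oddp m b) * oddp m b ≤ m ^ sval m b * oddp m b :=
    Nat.mul_le_mul_right _ (Nat.pow_le_pow_right (by omega) (by omega))
  have h3 := TT_spec j hm ha0 (m := m)
  omega

lemma sval_le_TT {m j : ℕ} (hm : 2 ≤ m) {b : ℕ} (hb : 0 < b) (hbj : b ≤ m * j) :
    sval m b ≤ TT m j hm (oddp m b) := by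
  have ha0 : 0 < oddp m b := oddp_pos m hb
  have hab : m ^ sval m b * oddp m b = b := sval_mul_oddp m b
  by_contra h
  have h2 : m ^ (TT m j hm (oddp m b) + 1) * oddp m b ≤ m ^ sval m b * oddp m b :=
    Nat.mul_le_mul_right _ (Nat.pow_le_pow_right (by omega) (by omega))
  have h3 := TT_spec j hm ha0 (m := m)
  have h4 : m ^ (TT m j hm (oddp m b) + 1) * oddp m b
      = m * (m ^ TT m j hm (oddp m b) * oddp m b) := by
    rw [pow_succ']; ring
  have h5 : m * (j + 1) ≤ m * (m ^ TT m j hm (oddp m b) * oddp m b) :=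
    Nat.mul_le_mul_left m (by omega)
  have h6 : m * (j + 1) = m * j + m := by ring
  omega

lemma count_mergeM_lt {m j : ℕ} (hm : 2 ≤ m) {s : Multiset ℕ}
    (hs : ∀ a ∈ s, ¬ m ∣ a ∧ 0 < a) {b : ℕ} (hbj : b ≤ j) :
    (mergeM m j hm s).count b < m := by
  rcases Nat.eq_zero_or_pos b with hb0 | hb0
  · subst hb0
    have : (0 : ℕ) ∉ mergeM m j hm s := by
      intro h
      obtain ⟨a, ha, i, _, hbi⟩ := mem_mergeM h
      have := (hs a ha).2
      have : 0 < m ^ i * a := by positivity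
      omega
    rw [Multiset.count_eq_zero.2 this]
    omega
  · have hlt := sval_lt_TT hm hb0 hbj (j := j)
    rw [count_mergeM j hm hs hb0 (le_of_lt hlt), if_pos hlt]
    exact Nat.mod_lt _ (by omega)

lemma mergeM_splitM {m : ℕ} (j : ℕ) (hm : 2 ≤ m) {t : Multiset ℕ}
    (ht1 : ∀ b ∈ t, 0 < b ∧ b ≤ m * j) (ht2 : ∀ b, b ≤ j → t.count b < m) :
    mergeM m j hm (splitM m t) = t := by
  have hsprop : ∀ a ∈ splitM m t, ¬ m ∣ a ∧ 0 < a := by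
    intro a ha
    obtain ⟨b, hb, hba⟩ := (mem_splitM hm).1 ha
    have hb0 := (ht1 b hb).1
    exact ⟨hba ▸ not_dvd_oddp hm hb0, hba ▸ oddp_pos m hb0⟩
  have hsbdd : ∀ a ∈ splitM m t, a ≤ m * j := by
    intro a ha
    obtain ⟨b, hb, hba⟩ := (mem_splitM hm).1 ha
    have := (ht1 b hb).2
    have := oddp_le m b
    omega
  ext b
  rcases Nat.eq_zero_or_pos b with hb0 | hb0
  · subst hb0
    have h1 : (0 : ℕ) ∉ mergeM m j hm (splitM m t) := by
      intro h
      obtain ⟨a, ha, i, _, hbi⟩ := mem_mergeM h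
      have := (hsprop a ha).2
      have : 0 < m ^ i * a := by positivity
      omega
    have h2 : (0 : ℕ) ∉ t := fun h => by have := (ht1 0 h).1; omega
    rw [Multiset.count_eq_zero.2 h1, Multiset.count_eq_zero.2 h2]
  rcases Nat.lt_or_ge (m * j) b with hgt | hble
  · -- b > m*j : both sides zero
    have h1 : b ∉ mergeM m j hm (splitM m t) := by
      intro h
      obtain ⟨a, ha, i, hi, hbi⟩ := mem_mergeM h
      have h2 := chunk_part_le hm (hsprop a ha).2 (hsbdd a ha) hi
      omega
    have h2 : b ∉ t := fun h => by have := (ht1 b h).2; omega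
    rw [Multiset.count_eq_zero.2 h1, Multiset.count_eq_zero.2 h2]
  · -- 1 ≤ b ≤ m*j
    have ha₀def : oddp m b = oddp m b := rfl
    obtain ⟨a₀, ha₀def⟩ : ∃ x, oddp m b = x := ⟨_, rfl⟩
    obtain ⟨v, hvdef⟩ : ∃ x, sval m b = x := ⟨_, rfl⟩
    obtain ⟨T, hTdef⟩ : ∃ x, TT m j hm a₀ = x := ⟨_, rfl⟩
    have ha0 : 0 < a₀ := ha₀def ▸ oddp_pos m hb0
    have hdvd : ¬ m ∣ a₀ := ha₀def ▸ not_dvd_oddp hm hb0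
    have hab : m ^ v * a₀ = b := by rw [← ha₀def, ← hvdef]; exact sval_mul_oddp m b
    have hvT : v ≤ T := by
      rw [← hvdef, ← hTdef, ← ha₀def]
      exact sval_le_TT hm hb0 hble
    -- the count of `a₀` in `splitM t` as a digit expansion
    have hc : (splitM m t).count a₀ = ∑ i ∈ Finset.range (T + 1), t.count (m ^ i * a₀) * m ^ i := by
      apply count_splitM hm hdvd
      intro b' hb'
      have h1 := (ht1 b' hb').2
      have h2 : m * (j + 1) ≤ m * (m ^ T * a₀) :=
        Nat.mul_le_mul_left m (by rw [← hTdef] at *; exact TT_spec j hm ha0)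
      have h3 : m ^ (T + 1) * a₀ = m * (m ^ T * a₀) := by rw [pow_succ']; ring
      have h4 : m * (j + 1) = m * j + m := by ring
      omega
    have hdig : ∀ i < T, t.count (m ^ i * a₀) < m := by
      intro i hi
      exact ht2 _ (TT_min j hm ha0 (hTdef ▸ hi))
    have hvT' : sval m b ≤ TT m j hm (oddp m b) := by rw [hvdef, ha₀def, hTdef]; exact hvT
    rw [count_mergeM j hm hsprop hb0 hvT', ha₀def, hvdef, hTdef, hc]
    rcases Nat.lt_or_ge v T with hlt | hge
    · rw [if_pos hlt, digit_extract_lt hm T _ hdig hlt, hab]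
    · have hveq : v = T := by omega
      rw [if_neg (by omega), digit_extract_top hm T _ hdig, ← hveq, hab]
/-! ### the full bijection -/

lemma sup_eq_of_mem {s : Multiset ℕ} {L : ℕ} (hL : L ∈ s) (hb : ∀ b ∈ s, b ≤ L) :
    s.sup = L :=
  le_antisymm (Multiset.sup_le.2 hb) (Multiset.le_sup hL)

def fwd (m : ℕ) (hm : 2 ≤ m) (s : Multiset ℕ) : Multiset ℕ :=
  (m * (s.sup / m + 1)) ::ₘ mergeM m (s.sup / m + 1) hm (s.erase s.sup)

def bwd (m : ℕ) (t : Multiset ℕ) : Multiset ℕ :=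
  (t.sup - 1) ::ₘ splitM m (t.erase t.sup)

section main

variable {m n : ℕ}

/-- The source (left-hand side) condition. -/
def PP (m n : ℕ) (s : Multiset ℕ) : Prop :=
  s.sum = n ∧ (∀ a ∈ s, 0 < a) ∧ (∀ a ∈ s, ¬ m ∣ a) ∧
    ∃ L ∈ s, (∀ b ∈ s, b ≤ L) ∧ L % m = m - 1

/-- The target (right-hand side) condition. -/
def QQ (m n : ℕ) (s : Multiset ℕ) : Prop :=
  s.sum = n + 1 ∧ (∀ a ∈ s, 0 < a) ∧
    ∃ j : ℕ, m * j ∈ s ∧ (∀ b ∈ s, b ≤ m * j) ∧ ∀ b ∈ s, b ≤ j → s.count b < m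

lemma left_facts (hm : 2 ≤ m) {s : Multiset ℕ} (h : PP m n s) :
    s.sup ∈ s ∧ (∀ b ∈ s, b ≤ s.sup) ∧ s.sup % m = m - 1 ∧
      m * (s.sup / m + 1) = s.sup + 1 := by
  obtain ⟨-, -, -, L, hL, hLb, hLm⟩ := h
  have hsup : s.sup = L := sup_eq_of_mem hL hLb
  refine ⟨hsup ▸ hL, fun b hb => hsup ▸ hLb b hb, hsup ▸ hLm, ?_⟩
  have h1 := Nat.div_add_mod s.sup m
  have h2 : m * (s.sup / m + 1) = m * (s.sup / m) + m := by ring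
  rw [hsup] at *
  omega

lemma erase_sup_facts (hm : 2 ≤ m) {s : Multiset ℕ} (h : PP m n s) :
    ∀ a ∈ s.erase s.sup, ¬ m ∣ a ∧ 0 < a ∧ a ≤ m * (s.sup / m + 1) := by
  obtain ⟨hL, hLb, hLm, hmj⟩ := left_facts hm h
  intro a ha
  have ha' : a ∈ s := Multiset.mem_of_mem_erase ha
  exact ⟨h.2.2.1 a ha', h.2.1 a ha', by have := hLb a ha'; omega⟩

lemma fwd_mem (hm : 2 ≤ m) {s : Multiset ℕ} (h : PP m n s) : QQ m n (fwd m hm s) := by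
  obtain ⟨hL, hLb, hLm, hmj⟩ := left_facts hm h
  have herase := erase_sup_facts hm h
  have hcons := Multiset.cons_erase hL
  obtain ⟨j, hjdef⟩ : ∃ x, s.sup / m + 1 = x := ⟨_, rfl⟩
  rw [hjdef] at hmj
  have herase' : ∀ a ∈ s.erase s.sup, ¬ m ∣ a ∧ 0 < a ∧ a ≤ m * j := hjdef ▸ herase
  have hsum : (s.erase s.sup).sum + s.sup = n := by
    have : s.sum = s.sup + (s.erase s.sup).sum := by
      conv_lhs => rw [← hcons]
      rw [Multiset.sum_cons]
    have hn := h.1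
    omega
  have hmsum : (mergeM m j hm (s.erase s.sup)).sum = (s.erase s.sup).sum := by
    have h1 := sum_splitM m (mergeM m j hm (s.erase s.sup))
    rw [splitM_mergeM j hm (fun a ha => (herase' a ha).1)] at h1
    omega
  have hbounds := mergeM_bounds hm (s := s.erase s.sup) (fun a ha => herase' a ha)
  have hjpos : 0 < j := hjdef ▸ Nat.succ_pos _
  refine ⟨?_, ?_, j, ?_, ?_, ?_⟩
  · rw [fwd, hjdef, Multiset.sum_cons, hmsum]
    omega
  · intro a ha
    rw [fwd, hjdef, Multiset.mem_cons] at ha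
    rcases ha with rfl | ha
    · omega
    · exact (hbounds a ha).1
  · rw [fwd, hjdef]
    exact Multiset.mem_cons_self _ _
  · intro b hb
    rw [fwd, hjdef, Multiset.mem_cons] at hb
    rcases hb with rfl | hb
    · exact le_rfl
    · exact (hbounds b hb).2
  · intro b hb hbj
    have hjlt : j < m * j := by
      have h2 : 2 * j ≤ m * j := Nat.mul_le_mul_right j hm
      omega
    rw [fwd, hjdef, Multiset.count_cons, if_neg (by omega : ¬ b = m * j), add_zero]
    exact count_mergeM_lt hm (fun a ha => ⟨(herase' a ha).1, (herase' a ha).2.1⟩) hbj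

lemma bwd_mem (hm : 2 ≤ m) {t : Multiset ℕ} (h : QQ m n t) : PP m n (bwd m t) := by
  obtain ⟨hsum, hpos, j₀, hj₀, hj₀b, hj₀c⟩ := h
  have hsup : t.sup = m * j₀ := sup_eq_of_mem hj₀ hj₀b
  have hj₀pos : 0 < j₀ := by
    have := hpos _ hj₀
    rcases Nat.eq_zero_or_pos j₀ with h0 | h0
    · subst h0; omega
    · exact h0
  have hMpos : 2 ≤ m * j₀ := by
    have : m * 1 ≤ m * j₀ := Nat.mul_le_mul_left m hj₀pos
    omega
  obtain ⟨k, rfl⟩ : ∃ k, j₀ = k + 1 := ⟨j₀ - 1, by omega⟩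
  have hexp : m * (k + 1) = m * k + m := by ring
  have hmod : (m * (k + 1) - 1) % m = m - 1 := by
    rw [show m * (k + 1) - 1 = (m - 1) + m * k from by omega]
    rw [Nat.add_mul_mod_self_left]
    exact Nat.mod_eq_of_lt (by omega)
  have hcons := Multiset.cons_erase hj₀
  have htsum : (t.erase t.sup).sum + m * (k + 1) = n + 1 := by
    have : t.sum = m * (k + 1) + (t.erase t.sup).sum := by
      conv_lhs => rw [← hcons]
      rw [Multiset.sum_cons, hsup]
    omega
  have hsplit_mem : ∀ a ∈ splitM m (t.erase t.sup), ¬ m ∣ a ∧ 0 < a ∧ a ≤ m * (k + 1) - 1 := by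
    intro a ha
    obtain ⟨b, hb, hba⟩ := (mem_splitM hm).1 ha
    have hb' : b ∈ t := Multiset.mem_of_mem_erase hb
    have hb0 : 0 < b := hpos b hb'
    have hdvd : ¬ m ∣ a := hba ▸ not_dvd_oddp hm hb0
    have hb1 : a ≤ b := hba ▸ oddp_le m b
    have hb2 : b ≤ m * (k + 1) := hj₀b b hb'
    have hne : a ≠ m * (k + 1) := fun hc => hdvd (hc ▸ ⟨k + 1, rfl⟩)
    exact ⟨hdvd, hba ▸ oddp_pos m hb0, by omega⟩
  refine ⟨?_, ?_, ?_, m * (k + 1) - 1,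
    by rw [bwd, hsup]; exact Multiset.mem_cons_self _ _, ?_, hmod⟩
  · rw [bwd, Multiset.sum_cons, sum_splitM]
    omega
  · intro a ha
    rw [bwd, Multiset.mem_cons] at ha
    rcases ha with rfl | ha
    · rw [hsup]; omega
    · exact (hsplit_mem a ha).2.1
  · intro a ha
    rw [bwd, Multiset.mem_cons] at ha
    rcases ha with rfl | ha
    · rw [hsup]
      rintro ⟨q, hq⟩
      have h0 : (m * q) % m = 0 := Nat.mul_mod_right m q
      rw [hq] at hmod
      omega
    · exact (hsplit_mem a ha).1
  · intro b hb
    rw [bwd, Multiset.mem_cons] at hb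
    rcases hb with rfl | hb
    · rw [hsup]
    · have h1 := (hsplit_mem b hb).2.2
      omega

lemma bwd_fwd (hm : 2 ≤ m) {s : Multiset ℕ} (h : PP m n s) : bwd m (fwd m hm s) = s := by
  obtain ⟨hL, hLb, hLm, hmj⟩ := left_facts hm h
  have herase := erase_sup_facts hm h
  obtain ⟨j, hjdef⟩ : ∃ x, s.sup / m + 1 = x := ⟨_, rfl⟩
  rw [hjdef] at hmj
  have herase' : ∀ a ∈ s.erase s.sup, ¬ m ∣ a ∧ 0 < a ∧ a ≤ m * j := hjdef ▸ herase
  have hbounds := mergeM_bounds hm (s := s.erase s.sup) (fun a ha => herase' a ha)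
  have hsupfwd : (fwd m hm s).sup = m * j := by
    rw [fwd, hjdef]
    apply sup_eq_of_mem (Multiset.mem_cons_self _ _)
    intro b hb
    rw [Multiset.mem_cons] at hb
    rcases hb with rfl | hb
    · exact le_rfl
    · exact (hbounds b hb).2
  rw [bwd, hsupfwd, fwd, hjdef, Multiset.erase_cons_head,
    splitM_mergeM j hm (fun a ha => (herase' a ha).1),
    show m * j - 1 = s.sup from by omega, Multiset.cons_erase hL]

lemma fwd_bwd (hm : 2 ≤ m) {t : Multiset ℕ} (h : QQ m n t) : fwd m hm (bwd m t) = t := by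
  obtain ⟨hsum, hpos, j₀, hj₀, hj₀b, hj₀c⟩ := h
  have hsup : t.sup = m * j₀ := sup_eq_of_mem hj₀ hj₀b
  have hj₀pos : 0 < j₀ := by
    have := hpos _ hj₀
    rcases Nat.eq_zero_or_pos j₀ with h0 | h0
    · subst h0; omega
    · exact h0
  have hMpos : 2 ≤ m * j₀ := by
    have : m * 1 ≤ m * j₀ := Nat.mul_le_mul_left m hj₀pos
    omega
  have hQ : QQ m n t := ⟨hsum, hpos, j₀, hj₀, hj₀b, hj₀c⟩
  have hPbwd := bwd_mem hm hQ
  have hsplit_mem : ∀ a ∈ splitM m (t.erase t.sup), a ≤ m * j₀ - 1 := by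
    intro a ha
    obtain ⟨b, hb, hba⟩ := (mem_splitM hm).1 ha
    have hb' : b ∈ t := Multiset.mem_of_mem_erase hb
    have hb0 : 0 < b := hpos b hb'
    have hdvd : ¬ m ∣ a := hba ▸ not_dvd_oddp hm hb0
    have hb1 : a ≤ b := hba ▸ oddp_le m b
    have hb2 : b ≤ m * j₀ := hj₀b b hb'
    have hne : a ≠ m * j₀ := fun hc => hdvd (hc ▸ ⟨j₀, rfl⟩)
    omega
  have hsupbwd : (bwd m t).sup = m * j₀ - 1 := by
    apply sup_eq_of_mem
    · rw [bwd, hsup]; exact Multiset.mem_cons_self _ _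
    · intro b hb
      rw [bwd, Multiset.mem_cons] at hb
      rcases hb with rfl | hb
      · rw [hsup]
      · have h1 := hsplit_mem b hb
        omega
  have hdiv : (m * j₀ - 1) / m + 1 = j₀ := by
    obtain ⟨k, rfl⟩ : ∃ k, j₀ = k + 1 := ⟨j₀ - 1, by omega⟩
    have hexp : m * (k + 1) = m * k + m := by ring
    rw [show m * (k + 1) - 1 = m * k + (m - 1) from by omega,
      Nat.mul_add_div (by omega : 0 < m), Nat.div_eq_of_lt (by omega), add_zero]
  have hkey : mergeM m j₀ hm (splitM m (t.erase t.sup)) = t.erase t.sup := by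
    apply mergeM_splitM j₀ hm
    · intro b hb
      have hb' : b ∈ t := Multiset.mem_of_mem_erase hb
      exact ⟨hpos b hb', hj₀b b hb'⟩
    · intro b hbj
      by_cases hbt : b ∈ t
      · calc (t.erase t.sup).count b ≤ t.count b :=
              Multiset.count_le_of_le b (Multiset.erase_le _ _)
          _ < m := hj₀c b hbt hbj
      · have : (t.erase t.sup).count b = 0 := Multiset.count_eq_zero.2
          (fun hc => hbt (Multiset.mem_of_mem_erase hc))
        omega
  have hh : t.sup - 1 = m * j₀ - 1 := by rw [hsup]
  rw [fwd, hsupbwd, hdiv, bwd, hh, Multiset.erase_cons_head, hkey, hsup]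
  exact Multiset.cons_erase hj₀

end main
end LinZhangAux

/-- Lin–Zhang: for `m ≥ 2` and `n ≥ 1`, the number of partitions of `n` into parts not
divisible by `m` whose largest part is `≡ m - 1 (mod m)` equals the number of partitions
of `n+1` whose largest part is divisible by `m`, say `m*j`, with all parts `≤ j`
occurring fewer than `m` times. -/
theorem lin_zhang (m : ℕ) (hm : 2 ≤ m) (n : ℕ) (hn : 0 < n) :
    Nat.card {s : Multiset ℕ // s.sum = n ∧ (∀ a ∈ s, 0 < a) ∧ (∀ a ∈ s, ¬ m ∣ a) ∧
      ∃ L ∈ s, (∀ b ∈ s, b ≤ L) ∧ L % m = m - 1} =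
    Nat.card {s : Multiset ℕ // s.sum = n + 1 ∧ (∀ a ∈ s, 0 < a) ∧
      ∃ j : ℕ, m * j ∈ s ∧ (∀ b ∈ s, b ≤ m * j) ∧ ∀ b ∈ s, b ≤ j → s.count b < m} := by
  apply Nat.card_congr
  exact
    { toFun := fun x => ⟨LinZhangAux.fwd m hm x.1, LinZhangAux.fwd_mem hm x.2⟩
      invFun := fun y => ⟨LinZhangAux.bwd m y.1, LinZhangAux.bwd_mem hm y.2⟩
      left_inv := fun x => Subtype.ext (LinZhangAux.bwd_fwd hm x.2)
      right_inv := fun y => Subtype.ext (LinZhangAux.fwd_bwd hm y.2) }
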